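/- If W ⊆ C^{n×q} and Z ⊆ C^{n'×q'} are subspaces both satisfying property (C1), then the direct sum W ⊕ Z, viewed as block-diagonal matrices inside C^{(n+n')×(q+q')}, also satisfies property (C1). -/

import Mathlib

open Matrix

/-- Property (C1) of a set of matrices. -/
def HasC1 {n q : Type*} [Fintype q] (W : Set (Matrix n q ℂ)) : Prop :=
  ∀ (k : ℕ) (X : Fin k → Matrix n q ℂ), (∀ i, X i ∈ W) → LinearIndependent ℂ X →
    ∃ v : q → ℂ, LinearIndependent ℂ fun i => (X i).mulVec v

section Aux

variable {n q n' q' : ℕ}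

/-- Extract the (1,1) block, as a linear map. -/
noncomputable def blk11L :
    Matrix (Fin n ⊕ Fin n') (Fin q ⊕ Fin q') ℂ →ₗ[ℂ] Matrix (Fin n) (Fin q) ℂ where
  toFun := Matrix.toBlocks₁₁
  map_add' _ _ := rfl
  map_smul' _ _ := rfl

/-- Extract the (2,2) block, as a linear map. -/
noncomputable def blk22L :
    Matrix (Fin n ⊕ Fin n') (Fin q ⊕ Fin q') ℂ →ₗ[ℂ] Matrix (Fin n') (Fin q') ℂ where
  toFun := Matrix.toBlocks₂₂
  map_add' _ _ := rfl
  map_smul' _ _ := rfl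

/-- `A ↦ A.mulVec v` as a linear map. -/
noncomputable def mulVecL {m p : Type*} [Fintype p] (v : p → ℂ) :
    Matrix m p ℂ →ₗ[ℂ] (m → ℂ) where
  toFun A := A.mulVec v
  map_add' A B := Matrix.add_mulVec A B v
  map_smul' c A := Matrix.smul_mulVec c A v

end Aux

/-- If subspaces `W ⊆ ℂ^{n×q}` and `Z ⊆ ℂ^{n'×q'}` both satisfy (C1), then the
block-diagonal direct sum `W ⊕ Z` inside `ℂ^{(n+n')×(q+q')}` satisfies (C1). -/
theorem stmt7 {n q n' q' : ℕ}
    (W : Submodule ℂ (Matrix (Fin n) (Fin q) ℂ))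
    (Z : Submodule ℂ (Matrix (Fin n') (Fin q') ℂ))
    (hW : HasC1 (W : Set (Matrix (Fin n) (Fin q) ℂ)))
    (hZ : HasC1 (Z : Set (Matrix (Fin n') (Fin q') ℂ))) :
    HasC1 {M : Matrix (Fin n ⊕ Fin n') (Fin q ⊕ Fin q') ℂ |
      ∃ X ∈ W, ∃ Y ∈ Z, M = Matrix.fromBlocks X 0 0 Y} := by
  classical
  intro k M hM hMli
  -- the set is a submodule `U`
  set U : Submodule ℂ (Matrix (Fin n ⊕ Fin n') (Fin q ⊕ Fin q') ℂ) :=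
    { carrier := {M : Matrix (Fin n ⊕ Fin n') (Fin q ⊕ Fin q') ℂ |
        ∃ X ∈ W, ∃ Y ∈ Z, M = Matrix.fromBlocks X 0 0 Y}
      add_mem' := by
        rintro a b ⟨X₁, hX₁, Y₁, hY₁, rfl⟩ ⟨X₂, hX₂, Y₂, hY₂, rfl⟩
        exact ⟨X₁ + X₂, W.add_mem hX₁ hX₂, Y₁ + Y₂, Z.add_mem hY₁ hY₂,
          by simp [Matrix.fromBlocks_add]⟩
      zero_mem' := ⟨0, W.zero_mem, 0, Z.zero_mem, by simp⟩
      smul_mem' := by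
        rintro c a ⟨X₁, hX₁, Y₁, hY₁, rfl⟩
        exact ⟨c • X₁, W.smul_mem c hX₁, c • Y₁, Z.smul_mem c hY₁, by
          simp [Matrix.fromBlocks_smul]⟩ } with hU
  -- the span of the family
  set V : Submodule ℂ (Matrix (Fin n ⊕ Fin n') (Fin q ⊕ Fin q') ℂ) :=
    Submodule.span ℂ (Set.range M) with hV
  have hVU : V ≤ U := Submodule.span_le.2 (Set.range_subset_iff.2 hM)
  -- the (1,1)-block map restricted to V
  set f : V →ₗ[ℂ] Matrix (Fin n) (Fin q) ℂ := blk11L.comp V.subtype with hf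
  set K : Submodule ℂ V := LinearMap.ker f with hK
  obtain ⟨K', hcompl⟩ := Submodule.exists_isCompl K
  haveI : FiniteDimensional ℂ V := FiniteDimensional.finiteDimensional_submodule V
  haveI := Module.Free.of_divisionRing (K := ℂ) (V := K)
  haveI := Module.Free.of_divisionRing (K := ℂ) (V := K')
  set r := Module.finrank ℂ K' with hr
  set s := Module.finrank ℂ K with hs
  set bK : Module.Basis (Fin s) ℂ K := Module.finBasis ℂ K with hbK
  set bK' : Module.Basis (Fin r) ℂ K' := Module.finBasis ℂ K' with hbK'
  set b : Module.Basis (Fin r ⊕ Fin s) ℂ V :=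
    (bK'.prod bK).map (Submodule.prodEquivOfIsCompl K' K hcompl.symm) with hb
  set N : Fin r ⊕ Fin s → Matrix (Fin n ⊕ Fin n') (Fin q ⊕ Fin q') ℂ :=
    fun i => ((b i : V) : Matrix (Fin n ⊕ Fin n') (Fin q ⊕ Fin q') ℂ) with hN
  have hNU : ∀ i, N i ∈ U := fun i => hVU (b i).2
  choose X' hX'W Y' hY'Z hNeq using fun i => hNU i
  -- b (inl j) lies in K'
  have hbinl : ∀ j : Fin r, b (Sum.inl j) ∈ K' := by
    intro j
    have h1 : b (Sum.inl j) = (bK' j : V) := by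
      simp [hb, Module.Basis.map_apply, Module.Basis.prod_apply, Submodule.coe_prodEquivOfIsCompl']
    rw [h1]; exact (bK' j).2
  have hbinr : ∀ j : Fin s, b (Sum.inr j) ∈ K := by
    intro j
    have h1 : b (Sum.inr j) = (bK j : V) := by
      simp [hb, Module.Basis.map_apply, Module.Basis.prod_apply, Submodule.coe_prodEquivOfIsCompl']
    rw [h1]; exact (bK j).2
  -- block values of N
  have hNX : ∀ i, blk11L (N i) = X' i := by
    intro i; rw [hNeq i]; exact Matrix.toBlocks_fromBlocks₁₁ _ _ _ _
  have hNY : ∀ i, blk22L (N i) = Y' i := by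
    intro i; rw [hNeq i]; exact Matrix.toBlocks_fromBlocks₂₂ _ _ _ _
  -- X' vanishes on the inr part
  have hX'inr : ∀ j : Fin s, X' (Sum.inr j) = 0 := by
    intro j
    have h1 : f (b (Sum.inr j)) = 0 := hbinr j
    rw [← hNX (Sum.inr j)]
    exact h1
  -- N is linearly independent
  have hNli : LinearIndependent ℂ N :=
    b.linearIndependent.map' V.subtype V.ker_subtype
  -- f (b i) = X' i
  have hfb : ∀ i, f (b i) = X' i := fun i => hNX i
  -- X' ∘ inl is linearly independent
  have hX'li : LinearIndependent ℂ fun j : Fin r => X' (Sum.inl j) := by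
    rw [Fintype.linearIndependent_iff]
    intro c hc
    set xv : V := ∑ j, c j • b (Sum.inl j) with hxv
    have hxK' : xv ∈ K' := Submodule.sum_mem _ fun j _ => K'.smul_mem _ (hbinl j)
    have hxK : xv ∈ K := by
      rw [hK, LinearMap.mem_ker, hxv, map_sum]
      simp only [_root_.map_smul, hfb]
      exact hc
    have hx0 : xv = 0 := Submodule.disjoint_def.mp hcompl.disjoint xv hxK hxK'
    have hbli := b.linearIndependent.comp Sum.inl Sum.inl_injective
    exact Fintype.linearIndependent_iff.mp hbli c (hxv ▸ hx0)
  -- Y' ∘ inr is linearly independent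
  have hY'li : LinearIndependent ℂ fun j : Fin s => Y' (Sum.inr j) := by
    rw [Fintype.linearIndependent_iff]
    intro c hc
    set m := ∑ j, c j • N (Sum.inr j) with hm
    have hmU : m ∈ U := Submodule.sum_mem _ fun j _ => U.smul_mem _ (hNU _)
    obtain ⟨Xm, _, Ym, _, hmeq⟩ := hmU
    have h11 : blk11L m = 0 := by
      rw [hm, map_sum]
      simp only [_root_.map_smul, hNX, hX'inr, smul_zero, Finset.sum_const_zero]
    have h22 : blk22L m = 0 := by
      rw [hm, map_sum]
      simp only [_root_.map_smul, hNY]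
      exact hc
    have hXm : Xm = 0 := by
      have : blk11L m = Xm := by rw [hmeq]; exact Matrix.toBlocks_fromBlocks₁₁ _ _ _ _
      rw [← this, h11]
    have hYm : Ym = 0 := by
      have : blk22L m = Ym := by rw [hmeq]; exact Matrix.toBlocks_fromBlocks₂₂ _ _ _ _
      rw [← this, h22]
    have hm0 : m = 0 := by rw [hmeq, hXm, hYm]; simp
    have hNli' := hNli.comp Sum.inr Sum.inr_injective
    exact Fintype.linearIndependent_iff.mp hNli' c (hm ▸ hm0)
  -- apply (C1) of W and Z
  obtain ⟨v1, hv1⟩ := hW r (fun j => X' (Sum.inl j)) (fun j => hX'W _) hX'li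
  obtain ⟨v2, hv2⟩ := hZ s (fun j => Y' (Sum.inr j)) (fun j => hY'Z _) hY'li
  set v : Fin q ⊕ Fin q' → ℂ := Sum.elim v1 v2 with hv
  -- block description of N i *ᵥ v
  have hNv1 : ∀ i t, (N i).mulVec v (Sum.inl t) = (X' i).mulVec v1 t := by
    intro i t
    rw [hNeq i, hv]
    simp [Matrix.fromBlocks_mulVec]
  have hNv2 : ∀ i t, (N i).mulVec v (Sum.inr t) = (Y' i).mulVec v2 t := by
    intro i t
    rw [hNeq i, hv]
    simp [Matrix.fromBlocks_mulVec]
  -- linear independence of (N i) *ᵥ v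
  have hNv : LinearIndependent ℂ fun i => (N i).mulVec v := by
    rw [Fintype.linearIndependent_iff]
    intro c hc
    have hc1 : ∑ j : Fin r, c (Sum.inl j) • (X' (Sum.inl j)).mulVec v1 = 0 := by
      ext t
      have h := congrFun hc (Sum.inl t)
      simp only [Finset.sum_apply, Pi.smul_apply, Pi.zero_apply, hNv1,
        Fintype.sum_sum_type, hX'inr, Matrix.zero_mulVec, smul_zero,
        Finset.sum_const_zero, add_zero] at h ⊢
      exact h
    have hcl : ∀ j : Fin r, c (Sum.inl j) = 0 :=
      Fintype.linearIndependent_iff.mp hv1 _ hc1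
    have hc2 : ∑ j : Fin s, c (Sum.inr j) • (Y' (Sum.inr j)).mulVec v2 = 0 := by
      ext t
      have h := congrFun hc (Sum.inr t)
      simp only [Finset.sum_apply, Pi.smul_apply, Pi.zero_apply, hNv2,
        Fintype.sum_sum_type, hcl, zero_smul,
        Finset.sum_const_zero, zero_add] at h ⊢
      exact h
    have hcr : ∀ j : Fin s, c (Sum.inr j) = 0 :=
      Fintype.linearIndependent_iff.mp hv2 _ hc2
    intro i
    cases i with
    | inl j => exact hcl j
    | inr j => exact hcr j
  -- the map A ↦ A *ᵥ v is injective on V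
  refine ⟨v, ?_⟩
  have hdisj : Disjoint V (LinearMap.ker (mulVecL v)) := by
    rw [Submodule.disjoint_def]
    intro x hxV hxker
    rw [LinearMap.mem_ker] at hxker
    set xv : V := ⟨x, hxV⟩ with hxv
    have hrepr : ∑ i, b.repr xv i • N i = x := by
      have := b.sum_repr xv
      calc ∑ i, b.repr xv i • N i = ((∑ i, b.repr xv i • b i : V) : _) := by
            push_cast [hN]; rfl
        _ = x := by rw [this]
    have hsum : ∑ i, b.repr xv i • (N i).mulVec v = 0 := by
      have : mulVecL v x = 0 := hxker
      rw [← hrepr, map_sum] at this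
      simpa only [_root_.map_smul, mulVecL, LinearMap.coe_mk, AddHom.coe_mk] using this
    have hzero : ∀ i, b.repr xv i = 0 :=
      Fintype.linearIndependent_iff.mp hNv _ hsum
    have : xv = 0 := by
      have := b.sum_repr xv
      simp only [hzero, zero_smul, Finset.sum_const_zero] at this
      exact this.symm
    simpa [hxv] using congrArg (Subtype.val) this
  have := hMli.map (f := mulVecL v) (by rw [← hV] at *; exact hdisj)
  exact this
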